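/- Let Λ = diag(λ₁,…,λ_n) be a diagonal real matrix and let k : ℝ → Matrix (Fin n) (Fin n) ℝ satisfy, for every t, k'(t) = M(k(t)·Λ·k(t)ᵀ)·k(t) and k(t)ᵀ·k(t) = 1. Write L(t) = k(t)·Λ·k(t)ᵀ. Then each entry of the last row of k is a semiinvariant of the Toda flow: for every column index i and every t, the function t ↦ k(t)_{ni} satisfies (k(t)_{ni})′ = (L(t)_{nn} − λ_i)·k(t)_{ni}, where n denotes the last row index. -/

import Mathlib

open Matrix

attribute [local instance] Matrix.normedAddCommGroup Matrix.normedSpace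

/-- The Toda projection: `M(A)_{ij} = A_{ij}` for `i < j`, `M(A)_{ij} = -A_{ji}` for
`i > j`, and `M(A)_{ii} = 0`. -/
def todaProj {n : ℕ} (A : Matrix (Fin n) (Fin n) ℝ) : Matrix (Fin n) (Fin n) ℝ :=
  Matrix.of fun i j => if i < j then A i j else if j < i then -A j i else 0

/-- Each entry of the last row of an orthogonal solution `k(t)` of
`k' = M(k·Λ·kᵀ)·k` with `Λ = diag(λ)` is a semiinvariant of the Toda flow:
`(k_{ni})′ = (L_{nn} − λ_i)·k_{ni}` where `L = k·Λ·kᵀ` and `n` denotes the last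
index (`Fin.last n`). -/
theorem last_row_semiinvariant {n : ℕ} (lam : Fin (n + 1) → ℝ)
    (k : ℝ → Matrix (Fin (n + 1)) (Fin (n + 1)) ℝ)
    (hk : ∀ t, HasDerivAt k
      (todaProj (k t * Matrix.diagonal lam * (k t)ᵀ) * k t) t)
    (horth : ∀ t, (k t)ᵀ * k t = 1) :
    ∀ (i : Fin (n + 1)) (t : ℝ),
      HasDerivAt (fun t => k t (Fin.last n) i)
        (((k t * Matrix.diagonal lam * (k t)ᵀ) (Fin.last n) (Fin.last n) - lam i)
          * k t (Fin.last n) i) t := by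

  intro i t
  classical
  -- entrywise derivative via the continuous linear entry map
  let e : Matrix (Fin (n+1)) (Fin (n+1)) ℝ →ₗ[ℝ] ℝ :=
    { toFun := fun A => A (Fin.last n) i
      map_add' := fun _ _ => rfl
      map_smul' := fun _ _ => rfl }
  have hd : HasDerivAt (fun t => k t (Fin.last n) i)
      ((todaProj (k t * Matrix.diagonal lam * (k t)ᵀ) * k t) (Fin.last n) i) t := by
    have := (LinearMap.toContinuousLinearMap e).hasFDerivAt.comp_hasDerivAt t (hk t)
    exact this
  -- symmetry of L
  have hsymm : ∀ j, (k t * Matrix.diagonal lam * (k t)ᵀ) j (Fin.last n)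
      = (k t * Matrix.diagonal lam * (k t)ᵀ) (Fin.last n) j := by
    intro j
    have hT : (k t * Matrix.diagonal lam * (k t)ᵀ)ᵀ
        = k t * Matrix.diagonal lam * (k t)ᵀ := by
      rw [Matrix.transpose_mul, Matrix.transpose_mul, Matrix.transpose_transpose,
        Matrix.diagonal_transpose, Matrix.mul_assoc]
    conv_lhs => rw [← hT]
    rfl
  -- L * k = k * Λ
  have hLk : (k t * Matrix.diagonal lam * (k t)ᵀ) * k t = k t * Matrix.diagonal lam := by
    rw [Matrix.mul_assoc, horth t, Matrix.mul_one]
  -- compute the entry of todaProj L * k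
  have key : (todaProj (k t * Matrix.diagonal lam * (k t)ᵀ) * k t) (Fin.last n) i
      = ((k t * Matrix.diagonal lam * (k t)ᵀ) (Fin.last n) (Fin.last n) - lam i)
          * k t (Fin.last n) i := by
    have h1 : ∀ j : Fin (n+1),
        todaProj (k t * Matrix.diagonal lam * (k t)ᵀ) (Fin.last n) j * k t j i
        = -((k t * Matrix.diagonal lam * (k t)ᵀ) (Fin.last n) j * k t j i)
          + (if j = Fin.last n then
              (k t * Matrix.diagonal lam * (k t)ᵀ) (Fin.last n) (Fin.last n)
                * k t (Fin.last n) i else 0) := by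
      intro j
      rcases eq_or_lt_of_le (Fin.le_last j) with h | h
      · simp [todaProj, h, lt_irrefl]
      · simp only [todaProj, Matrix.of_apply, if_neg (not_lt.2 (Fin.le_last j)), if_pos h,
          if_neg (Fin.ne_of_lt h), hsymm j]
        ring
    have h2 : (todaProj (k t * Matrix.diagonal lam * (k t)ᵀ) * k t) (Fin.last n) i
        = ∑ j, todaProj (k t * Matrix.diagonal lam * (k t)ᵀ) (Fin.last n) j * k t j i :=
      rfl
    rw [h2]
    simp only [h1]
    rw [Finset.sum_add_distrib, Finset.sum_neg_distrib]
    rw [Finset.sum_ite_eq' Finset.univ (Fin.last n)]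
    have h3 : ∑ j, (k t * Matrix.diagonal lam * (k t)ᵀ) (Fin.last n) j * k t j i
        = ((k t * Matrix.diagonal lam * (k t)ᵀ) * k t) (Fin.last n) i := rfl
    rw [h3, hLk, Matrix.mul_diagonal]
    simp
    ring
  rw [← key]
  exact hd
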